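/- Let F be a strong (ω₁,λ)-semimorass. If X, Y ∈ F have equal rank in the well-founded partial order ⊊ on F, and α ∈ X ∩ Y ∩ ω₂, then X ∩ α = Y ∩ α. -/

import Mathlib

open Set Cardinal

noncomputable section

/-- The ordinal `ω₁`. -/
def omega1O : Ordinal := (Cardinal.aleph 1).ord
/-- The ordinal `ω₂`. -/
def omega2O : Ordinal := (Cardinal.aleph 2).ord

/-- The image of a set of ordinals `W ⊆ X` under an order isomorphism `e : X ≃o Y`. -/
def ordImage {X Y : Set Ordinal} (e : ↥X ≃o ↥Y) (W : Set Ordinal) : Set Ordinal :=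
  {o | ∃ w : ↥X, w.1 ∈ W ∧ (e w).1 = o}

/-- `F↾X = {Y ∈ F : Y ⊊ X}`. -/
def Frestrict (F : Set (Set Ordinal)) (X : Set Ordinal) : Set (Set Ordinal) :=
  {Y ∈ F | Y ⊂ X}

/-- `X = X₁ ⊕ X₂`: same order type, union, and `ρ_{X₁,X₂}` is the identity on `X₁ ∩ X₂`. -/
def Oplus (X X₁ X₂ : Set Ordinal) : Prop :=
  X = X₁ ∪ X₂ ∧ ∃ e : ↥X₁ ≃o ↥X₂, ∀ x : ↥X₁, x.1 ∈ X₂ → (e x).1 = x.1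

/-- `X = X₁ ⊙ X₂`: same order type, union, and `X₁ ∩ X₂ < X₁ \ X₂ < X₂ \ X₁` elementwise. -/
def Odot (X X₁ X₂ : Set Ordinal) : Prop :=
  X = X₁ ∪ X₂ ∧ Nonempty (↥X₁ ≃o ↥X₂) ∧
  (∀ a ∈ X₁ ∩ X₂, ∀ b ∈ X₁ \ X₂, a < b) ∧
  (∀ a ∈ X₁ ∩ X₂, ∀ c ∈ X₂ \ X₁, a < c) ∧
  (∀ b ∈ X₁ \ X₂, ∀ c ∈ X₂ \ X₁, b < c)

/-- `X = X₁ ⊗ X₂`: `X = X₁ ⊕ X₂` and `X ∩ ω₂ = (X₁ ∩ ω₂) ⊙ (X₂ ∩ ω₂)`. -/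
def Otimes (X X₁ X₂ : Set Ordinal) : Prop :=
  Oplus X X₁ X₂ ∧ Odot (X ∩ Iio omega2O) (X₁ ∩ Iio omega2O) (X₂ ∩ Iio omega2O)

/-- `rk` is the rank function of the well-founded relation `⊊` on `F`. -/
def IsRankFn (F : Set (Set Ordinal)) (rk : Set Ordinal → Ordinal) : Prop :=
  ∀ X ∈ F, rk X = sSup ((fun Y => rk Y + 1) '' Frestrict F X)

/-- `F ⊆ [λ]^ω` is a strong `(ω₁,λ)`-semimorass, with rank function `rk`:
(M1) `(F,⊆)` is well-founded (with rank `rk`); (M2) `F` is locally small;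
(M3) `F` is homogeneous; (M4) `F` is directed; (M5) `F` is strongly locally
semidirected; (M6) `F` covers `λ`. -/
def IsStrongSemimorass (lam : Ordinal) (F : Set (Set Ordinal))
    (rk : Set Ordinal → Ordinal) : Prop :=
  (∀ X ∈ F, X ⊆ Iio lam ∧ X.Countable ∧ X.Infinite) ∧
  WellFounded (fun A B : ↥F => A.1 ⊂ B.1) ∧
  IsRankFn F rk ∧
  (∀ X ∈ F, (Frestrict F X).Countable) ∧
  (∀ X ∈ F, ∀ Y ∈ F, rk X = rk Y →
    ∃ e : ↥X ≃o ↥Y, Frestrict F Y = ordImage e '' Frestrict F X) ∧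
  (∀ X ∈ F, ∀ Y ∈ F, ∃ Z ∈ F, X ∪ Y ⊆ Z) ∧
  (∀ X ∈ F, DirectedOn (· ⊆ ·) (Frestrict F X) ∨
    ∃ X₁ ∈ F, ∃ X₂ ∈ F, rk X₁ = rk X₂ ∧ Otimes X X₁ X₂ ∧
      Frestrict F X = Frestrict F X₁ ∪ Frestrict F X₂ ∪ {X₁, X₂}) ∧
  ⋃₀ F = Iio lam

end

/- ### Auxiliary lemmas -/

section ordImageLemmas

variable {X Y : Set Ordinal} (e : ↥X ≃o ↥Y)

lemma ordImage_subset_codomain (W : Set Ordinal) : ordImage e W ⊆ Y := by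
  rintro o ⟨w, -, rfl⟩; exact (e w).2

lemma ordImage_mono {W W' : Set Ordinal} (h : W ⊆ W') :
    ordImage e W ⊆ ordImage e W' := by
  rintro o ⟨w, hw, rfl⟩; exact ⟨w, h hw, rfl⟩

lemma subset_of_ordImage_subset {W W' : Set Ordinal} (hW : W ⊆ X)
    (h : ordImage e W ⊆ ordImage e W') : W ⊆ W' := by
  intro w hw
  obtain ⟨w', hw', he⟩ := h ⟨⟨w, hW hw⟩, hw, rfl⟩
  have : w' = ⟨w, hW hw⟩ := e.injective (Subtype.ext he)
  have hval : w'.1 = w := by rw [this]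
  rwa [hval] at hw'

lemma ordImage_ssubset {W W' : Set Ordinal} (hW' : W' ⊆ X) (h : W ⊂ W') :
    ordImage e W ⊂ ordImage e W' :=
  ⟨ordImage_mono e h.1, fun hc => h.2 (subset_of_ordImage_subset e hW' hc)⟩

lemma ssubset_of_ordImage_ssubset {W W' : Set Ordinal} (hW : W ⊆ X)
    (h : ordImage e W ⊂ ordImage e W') : W ⊂ W' :=
  ⟨subset_of_ordImage_subset e hW h.1, fun hc => h.2 (ordImage_mono e hc)⟩

end ordImageLemmas

/-- Rank is strictly monotone on `F` with respect to `⊂`. -/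
lemma rk_strict_mono {F : Set (Set Ordinal)} {rk : Set Ordinal → Ordinal}
    (hrk : IsRankFn F rk) (hcnt : ∀ X ∈ F, (Frestrict F X).Countable)
    {X Z : Set Ordinal} (hX : X ∈ F) (hZ : Z ∈ F) (hss : X ⊂ Z) : rk X < rk Z := by
  have hmem : rk X + 1 ∈ (fun Y => rk Y + 1) '' Frestrict F Z := ⟨X, ⟨hX, hss⟩, rfl⟩
  have hbdd : BddAbove ((fun Y => rk Y + 1) '' Frestrict F Z) := by
    have hc : ((fun Y => rk Y + 1) '' Frestrict F Z).Countable := ((hcnt Z hZ).image _)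
    have := hc.to_subtype
    exact Ordinal.bddAbove_of_small
  have h1 : rk X + 1 ≤ rk Z := by
    rw [hrk Z hZ]; exact le_csSup hbdd hmem
  have : rk X < rk X + 1 := by
    rw [Ordinal.add_one_eq_succ]; exact Order.lt_succ _
  exact lt_of_lt_of_le this h1

/-- `ordImage` along a morass-isomorphism preserves rank. -/
lemma rk_ordImage {F : Set (Set Ordinal)} {rk : Set Ordinal → Ordinal}
    (hwf : WellFounded (fun A B : ↥F => A.1 ⊂ B.1)) (hrk : IsRankFn F rk)
    {Z₁ Z₂ : Set Ordinal} (e : ↥Z₁ ≃o ↥Z₂)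
    (him : Frestrict F Z₂ = ordImage e '' Frestrict F Z₁) :
    ∀ W ∈ Frestrict F Z₁, rk (ordImage e W) = rk W := by
  have main : ∀ W : ↥F, W.1 ∈ Frestrict F Z₁ → rk (ordImage e W.1) = rk W.1 := by
    intro W
    induction W using hwf.induction with
    | _ W IH =>
      intro hWZ₁
      have hWsub : W.1 ⊆ Z₁ := hWZ₁.2.1
      have heWF : ordImage e W.1 ∈ Frestrict F Z₂ := by
        rw [him]; exact ⟨W.1, hWZ₁, rfl⟩
      -- the key set identity
      have hset : Frestrict F (ordImage e W.1) = ordImage e '' Frestrict F W.1 := by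
        ext V
        constructor
        · rintro ⟨hVF, hVss⟩
          have hVZ₂ : V ∈ Frestrict F Z₂ :=
            ⟨hVF, ssubset_of_ssubset_of_subset hVss (ordImage_subset_codomain e _)⟩
          rw [him] at hVZ₂
          obtain ⟨V', hV', rfl⟩ := hVZ₂
          refine ⟨V', ⟨hV'.1, ?_⟩, rfl⟩
          exact ssubset_of_ordImage_ssubset e hV'.2.1 hVss
        · rintro ⟨V', ⟨hV'F, hV'ss⟩, rfl⟩
          have hV'Z₁ : V' ∈ Frestrict F Z₁ := ⟨hV'F, hV'ss.trans hWZ₁.2⟩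
          have : ordImage e V' ∈ Frestrict F Z₂ := by rw [him]; exact ⟨V', hV'Z₁, rfl⟩
          exact ⟨this.1, ordImage_ssubset e hWsub hV'ss⟩
      have h1 : rk (ordImage e W.1) =
          sSup ((fun Y => rk Y + 1) '' Frestrict F (ordImage e W.1)) :=
        hrk _ heWF.1
      rw [h1, hset, Set.image_image]
      have h2 : (fun V => rk (ordImage e V) + 1) '' Frestrict F W.1 =
          (fun V => rk V + 1) '' Frestrict F W.1 := by
        apply Set.image_congr
        intro V hV
        have hVZ₁ : V ∈ Frestrict F Z₁ := ⟨hV.1, hV.2.trans hWZ₁.2⟩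
        rw [IH ⟨V, hV.1⟩ hV.2 hVZ₁]
      rw [h2, ← hrk W.1 W.2]
  intro W hW
  exact main ⟨W, hW.1⟩ hW

/-- Let `F` be a strong `(ω₁,λ)`-semimorass. If `X, Y ∈ F` have equal rank and
`α ∈ X ∩ Y ∩ ω₂`, then `X ∩ α = Y ∩ α`. -/
theorem stmt4 (lam : Cardinal) (hlam : Cardinal.aleph 1 ≤ lam)
    (F : Set (Set Ordinal)) (rk : Set Ordinal → Ordinal)
    (hF : IsStrongSemimorass lam.ord F rk) :
    ∀ X ∈ F, ∀ Y ∈ F, rk X = rk Y → ∀ α : Ordinal, α < omega2O → α ∈ X → α ∈ Y →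
      X ∩ Set.Iio α = Y ∩ Set.Iio α := by
  obtain ⟨hsz, hwf, hrk, hcnt, hhom, hdir, hM5, -⟩ := hF
  have main : ∀ Z : ↥F, ∀ X ∈ F, ∀ Y ∈ F, X ⊆ Z.1 → Y ⊆ Z.1 → rk X = rk Y →
      ∀ α : Ordinal, α < omega2O → α ∈ X → α ∈ Y → X ∩ Set.Iio α = Y ∩ Set.Iio α := by
    intro Z
    induction Z using hwf.induction with
    | _ Z IH =>
      intro X hX Y hY hXZ hYZ hrkXY α hαω hαX hαY
      by_cases hXeq : X = Z.1
      · by_cases hYeq : Y = Z.1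
        · rw [hXeq, hYeq]
        · exact absurd hrkXY (by
            have : rk Y < rk Z.1 :=
              rk_strict_mono hrk hcnt hY Z.2 ⟨hYZ, fun h => hYeq (le_antisymm hYZ h)⟩
            rw [hXeq]; exact (ne_of_gt this))
      · by_cases hYeq : Y = Z.1
        · exact absurd hrkXY (by
            have : rk X < rk Z.1 :=
              rk_strict_mono hrk hcnt hX Z.2 ⟨hXZ, fun h => hXeq (le_antisymm hXZ h)⟩
            rw [hYeq]; exact ne_of_lt this)
        · -- both X and Y are proper subsets of Z
          have hXr : X ∈ Frestrict F Z.1 := ⟨hX, hXZ, fun h => hXeq (le_antisymm hXZ h)⟩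
          have hYr : Y ∈ Frestrict F Z.1 := ⟨hY, hYZ, fun h => hYeq (le_antisymm hYZ h)⟩
          rcases hM5 Z.1 Z.2 with hd | ⟨Z₁, hZ₁F, Z₂, hZ₂F, hrk12, hot, hres⟩
          · -- F↾Z directed
            obtain ⟨W, hWr, hXW, hYW⟩ := hd X hXr Y hYr
            exact IH ⟨W, hWr.1⟩ hWr.2 X hX Y hY hXW hYW hrkXY α hαω hαX hαY
          · -- Z = Z₁ ⊗ Z₂
            have hZ₁r : Z₁ ∈ Frestrict F Z.1 := by
              rw [hres]; exact Or.inr (Set.mem_insert _ _)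
            have hZ₂r : Z₂ ∈ Frestrict F Z.1 := by
              rw [hres]; exact Or.inr (Set.mem_insert_of_mem _ rfl)
            obtain ⟨hZeq, e, hid⟩ := hot.1
            obtain ⟨-, -, hd1, hd2, -⟩ := hot.2
            obtain ⟨e', him⟩ := hhom Z₁ hZ₁F Z₂ hZ₂F hrk12
            have hee : e' = e := Subsingleton.elim e' e
            rw [hee] at him
            have key : ∀ X', X' ∈ Frestrict F Z₁ ∨ X' = Z₁ →
                ∀ Y', Y' ∈ Frestrict F Z₂ ∨ Y' = Z₂ →
                rk X' = rk Y' → α ∈ X' → α ∈ Y' → X' ∩ Set.Iio α = Y' ∩ Set.Iio α := by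
              intro X' hX's Y' hY's hrk' hαX' hαY'
              have hX'F : X' ∈ F := hX's.elim (fun h => h.1) (fun h => h ▸ hZ₁F)
              have hY'F : Y' ∈ F := hY's.elim (fun h => h.1) (fun h => h ▸ hZ₂F)
              have hX'sub : X' ⊆ Z₁ := hX's.elim (fun h => h.2.1) (fun h => h ▸ subset_rfl)
              have hY'sub : Y' ⊆ Z₂ := hY's.elim (fun h => h.2.1) (fun h => h ▸ subset_rfl)
              have hα1 : α ∈ Z₁ := hX'sub hαX'
              have hα2 : α ∈ Z₂ := hY'sub hαY'
              have trap : ∀ β < α, (β ∈ Z₁ ↔ β ∈ Z₂) := by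
                intro β hβ
                have hβω : β < omega2O := hβ.trans hαω
                have hαm : α ∈ (Z₁ ∩ Set.Iio omega2O) ∩ (Z₂ ∩ Set.Iio omega2O) :=
                  ⟨⟨hα1, hαω⟩, hα2, hαω⟩
                constructor
                · intro h; by_contra hc
                  have := hd1 α hαm β ⟨⟨h, hβω⟩, fun hm => hc hm.1⟩
                  exact absurd hβ (not_lt.2 this.le)
                · intro h; by_contra hc
                  have := hd2 α hαm β ⟨⟨h, hβω⟩, fun hm => hc hm.1⟩
                  exact absurd hβ (not_lt.2 this.le)
              rcases hX's with hX'r | hX'e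
              · rcases hY's with hY'r | hY'e
                · -- main case : Y' = ordImage e X''
                  have hY'img := hY'r
                  rw [him] at hY'img
                  obtain ⟨X'', hX''r, rfl⟩ := hY'img
                  have hαX'' : α ∈ X'' := by
                    obtain ⟨w, hw, hew⟩ := hαY'
                    have hw' : w = ⟨α, hα1⟩ :=
                      e.injective (Subtype.ext (hew.trans (hid ⟨α, hα1⟩ hα2).symm))
                    have hwv : w.1 = α := by rw [hw']
                    rwa [hwv] at hw
                  have hYX'' : ordImage e X'' ∩ Set.Iio α = X'' ∩ Set.Iio α := by
                    ext β
                    constructor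
                    · rintro ⟨⟨w, hw, rfl⟩, hβ⟩
                      have heα : (e ⟨α, hα1⟩).1 = α := hid _ hα2
                      have h1 : e w < e ⟨α, hα1⟩ := by
                        rw [← Subtype.coe_lt_coe, heα]; exact hβ
                      have hwlt : w < (⟨α, hα1⟩ : ↥Z₁) := e.lt_iff_lt.1 h1
                      have hwα : w.1 < α := Subtype.coe_lt_coe.2 hwlt
                      have hw2 : w.1 ∈ Z₂ := (trap w.1 hwα).1 w.2
                      have hewv : (e w).1 = w.1 := hid w hw2
                      rw [Set.mem_inter_iff, Set.mem_Iio, hewv]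
                      exact ⟨hw, hwα⟩
                    · rintro ⟨hβX'', hβ⟩
                      have hβ1 : β ∈ Z₁ := hX''r.2.1 hβX''
                      have hβ2 : β ∈ Z₂ := (trap β hβ).1 hβ1
                      exact ⟨⟨⟨β, hβ1⟩, hβX'', hid ⟨β, hβ1⟩ hβ2⟩, hβ⟩
                  have hXX'' : X' ∩ Set.Iio α = X'' ∩ Set.Iio α :=
                    IH ⟨Z₁, hZ₁F⟩ hZ₁r.2 X' hX'F X'' hX''r.1 hX'r.2.1 hX''r.2.1
                      (by rw [hrk']; exact (rk_ordImage hwf hrk e him X'' hX''r))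
                      α hαω hαX' hαX''
                  rw [hXX'', hYX'']
                · exact absurd hrk' (ne_of_lt (by
                    have h1 : rk X' < rk Z₁ := rk_strict_mono hrk hcnt hX'F hZ₁F hX'r.2
                    rw [hY'e, ← hrk12]; exact h1))
              · rcases hY's with hY'r | hY'e
                · exact absurd hrk' (ne_of_gt (by
                    have h1 : rk Y' < rk Z₂ := rk_strict_mono hrk hcnt hY'F hZ₂F hY'r.2
                    rw [hX'e, hrk12]; exact h1))
                · rw [hX'e, hY'e]
                  ext β
                  simp only [Set.mem_inter_iff, Set.mem_Iio]
                  constructor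
                  · rintro ⟨h, hβ⟩; exact ⟨(trap β hβ).1 h, hβ⟩
                  · rintro ⟨h, hβ⟩; exact ⟨(trap β hβ).2 h, hβ⟩
            rw [hres] at hXr hYr
            have hXc : (X ∈ Frestrict F Z₁ ∨ X = Z₁) ∨ (X ∈ Frestrict F Z₂ ∨ X = Z₂) := by
              rcases hXr with (h | h) | (h | h)
              · exact Or.inl (Or.inl h)
              · exact Or.inr (Or.inl h)
              · exact Or.inl (Or.inr h)
              · exact Or.inr (Or.inr h)
            have hYc : (Y ∈ Frestrict F Z₁ ∨ Y = Z₁) ∨ (Y ∈ Frestrict F Z₂ ∨ Y = Z₂) := by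
              rcases hYr with (h | h) | (h | h)
              · exact Or.inl (Or.inl h)
              · exact Or.inr (Or.inl h)
              · exact Or.inl (Or.inr h)
              · exact Or.inr (Or.inr h)
            rcases hXc with hX1 | hX2 <;> rcases hYc with hY1 | hY2
            · have hXs : X ⊆ Z₁ := hX1.elim (fun h => h.2.1) (fun h => h ▸ subset_rfl)
              have hYs : Y ⊆ Z₁ := hY1.elim (fun h => h.2.1) (fun h => h ▸ subset_rfl)
              exact IH ⟨Z₁, hZ₁F⟩ hZ₁r.2 X hX Y hY hXs hYs hrkXY α hαω hαX hαY
            · exact key X hX1 Y hY2 hrkXY hαX hαY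
            · exact (key Y hY1 X hX2 hrkXY.symm hαY hαX).symm
            · have hXs : X ⊆ Z₂ := hX2.elim (fun h => h.2.1) (fun h => h ▸ subset_rfl)
              have hYs : Y ⊆ Z₂ := hY2.elim (fun h => h.2.1) (fun h => h ▸ subset_rfl)
              exact IH ⟨Z₂, hZ₂F⟩ hZ₂r.2 X hX Y hY hXs hYs hrkXY α hαω hαX hαY
  intro X hX Y hY hrkXY α hαω hαX hαY
  obtain ⟨Z, hZ, hXYZ⟩ := hdir X hX Y hY
  exact main ⟨Z, hZ⟩ X hX Y hY (Set.subset_union_left.trans hXYZ)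
    (Set.subset_union_right.trans hXYZ) hrkXY α hαω hαX hαY
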